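/- (Factorisation, bulk part.) Suppose that for every n ≥ 1 the polynomial functions Q^{(n)} : ℂ^n → ℂ, with Q^{(1)} ≡ 1, satisfy the single-cluster bulk and jump equations: for every n ≥ 2 the function v ↦ (K̃(v) + (n³−n)γ)·Q^{(n)}(v) + β·Σ_{n₁+n₂=n, n₁,n₂≥1} √(n₁n₂n)·Q^{(n₁)}(v₁,…,v_{n₁})·Q^{(n₂)}(v_{n₁+1},…,v_n) is 𝔓_{[1,n]}-reducible on ℂ^n, and for every n₁, n₂ ≥ 1 with n₁+n₂ = n the function v ↦ V_{n₁n₂}(v)·Q^{(n₁)}(v₁,…,v_{n₁})·Q^{(n₂)}(v_{n₁+1},…,v_n) + V_{n₂n₁}(v)·Q^{(n₂)}(v₁,…,v_{n₂})·Q^{(n₁)}(v_{n₂+1},…,v_n) + 2n₁n₂β_{n₁n₂}·Q^{(n)}(v) is 𝔓_{[1,n]}-reducible on ℂ^n. Then for every composition m = (m₁,…,m_N) of M, with Q^m(v) = ∏_{j=1}^N Q^{(m_j)}(w_j(v)), and for every x ∈ ℝ^N, the function v ↦ [ (Σ_{j=1}^N K̃(w_j(v)) + (m_j³−m_j)γ)·Q^m(v)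 + Σ_{k=1}^N Σ_{n₁+n₂=m_k, n₁,n₂≥1} β_{n₁n₂}·Q^{m'}(v) ] · exp(Σ_{j=1}^N ⟨w_j(v)⟩ x_j) is 𝔓_{[1,M]}-reducible on ℂ^M, where m' = (m₁,…,m_{k−1}, n₁, n₂, m_{k+1},…,m_N). -/

import Mathlib

open scoped BigOperators

/-- The cubic polynomial `P(v) = v³ + 12γv − 4β²`. -/
noncomputable def Pcub (β γ v : ℂ) : ℂ := v ^ 3 + 12 * γ * v - 4 * β ^ 2

/-- `ℙ_{[a,b]}(v) = ∏_{a ≤ j < k ≤ b} P(v_k − v_j)` (indices 1-based). -/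
noncomputable def Pprod (β γ : ℂ) (M a b : ℕ) (v : Fin M → ℂ) : ℂ :=
  ∏ j : Fin M, ∏ k : Fin M,
    if a ≤ j.val + 1 ∧ j < k ∧ k.val + 1 ≤ b then Pcub β γ (v k - v j) else 1

/- `(𝔓_{[a,b]} g)(v) = Σ_{𝔰 ∈ 𝔖_{[a,b]}} sgn(𝔰) ℙ_{[a,b]}(𝔰·v) g(𝔰·v)`: the
sum runs over permutations fixing every (1-based) index outside `[a,b]`, and
`(𝔰·v)_j = v_{𝔰(j)}`. -/
open Classical in
noncomputable def Pop (β γ : ℂ) (M a b : ℕ) (g : (Fin M → ℂ) → ℂ) (v : Fin M → ℂ) : ℂ :=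
  ∑ s : Equiv.Perm (Fin M),
    if ∀ i : Fin M, ¬ (a ≤ i.val + 1 ∧ i.val + 1 ≤ b) → s i = i then
      ((Equiv.Perm.sign s : ℤ) : ℂ) * Pprod β γ M a b (v ∘ s) * g (v ∘ s)
    else 0

/-- `g` is `𝔓_{[a,b]}`-reducible if `𝔓_{[a,b]} g ≡ 0`. -/
def PReducible (β γ : ℂ) (M a b : ℕ) (g : (Fin M → ℂ) → ℂ) : Prop :=
  ∀ v : Fin M → ℂ, Pop β γ M a b g v = 0

/-- The segment `(v_{a+1}, …, v_{a+len})` of a vector `v ∈ ℂ^M` (0-based start `a`);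
out-of-range entries (never used below) default to `0`. -/
noncomputable def seg (M a len : ℕ) (v : Fin M → ℂ) : Fin len → ℂ :=
  fun i => if h : a + i.val < M then v ⟨a + i.val, h⟩ else 0

/-- `⟨w⟩ = Σ_i w_i`. -/
noncomputable def sumv {k : ℕ} (w : Fin k → ℂ) : ℂ := ∑ i, w i

/-- `K̃(w) = Σ_i w_i² − (Σ_i w_i)²/k`, the reduced kinetic energy of a cluster. -/
noncomputable def Ktilde (k : ℕ) (w : Fin k → ℂ) : ℂ :=
  (∑ i, w i ^ 2) - (∑ i, w i) ^ 2 / (k : ℂ)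

/-- `V_{n₁n₂}(u) = n₂(u₁+⋯+u_{n₁}) − n₁(u_{n₁+1}+⋯+u_{n₁+n₂})` for `u ∈ ℂ^k`
(`k = n₁ + n₂` in all uses). -/
noncomputable def Vseg (n₁ n₂ k : ℕ) (u : Fin k → ℂ) : ℂ :=
  (n₂ : ℂ) * sumv (seg k 0 n₁ u) - (n₁ : ℂ) * sumv (seg k n₁ n₂ u)

/-- `β_{n₁n₂} = β·√(n₁ n₂ (n₁+n₂))`. -/
noncomputable def betaC (β : ℂ) (n₁ n₂ : ℕ) : ℂ :=
  β * (Real.sqrt ((n₁ : ℝ) * (n₂ : ℝ) * ((n₁ : ℝ) + (n₂ : ℝ))) : ℂ)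

/-- `Q^m(v) = ∏_j Q^{(m_j)}(w_j(v))`, the factorised Ansatz attached to the
composition `m = (m₁, …, m_N)`, where `w_j(v)` is the `j`-th consecutive cluster
of `v` of size `m_j`. -/
noncomputable def Qm (Q : (n : ℕ) → (Fin n → ℂ) → ℂ) (M : ℕ) (m : List ℕ)
    (v : Fin M → ℂ) : ℂ :=
  ∏ j : Fin m.length, Q (m.get j) (seg M ((m.take j.val).sum) (m.get j) v)

/-- The exponential factor `exp(Σ_j ⟨w_j(v)⟩ x_j)`. -/
noncomputable def expFactor (M : ℕ) (m : List ℕ) (x : Fin m.length → ℝ)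
    (v : Fin M → ℂ) : ℂ :=
  Complex.exp (∑ j : Fin m.length,
    sumv (seg M ((m.take j.val).sum) (m.get j) v) * (x j : ℂ))

open Equiv

lemma pop_eq (β γ : ℂ) (n : ℕ) (g : (Fin n → ℂ) → ℂ) (v : Fin n → ℂ) :
    Pop β γ n 1 n g v =
      ∑ s : Perm (Fin n), ((Perm.sign s : ℤ) : ℂ) * Pprod β γ n 1 n (v ∘ s) * g (v ∘ s) := by
  unfold Pop
  refine Finset.sum_congr rfl fun s _ => ?_
  rw [if_pos]
  intro i hi
  exact absurd ⟨Nat.le_add_left 1 i.val, i.isLt⟩ hi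

lemma seg_shift (M L c a len : ℕ) (hM : M = c + L) (u : Fin M → ℂ) :
    seg M (c + a) len u = seg L a len (seg M c L u) := by
  subst hM
  funext i
  simp only [seg]
  by_cases h : a + i.val < L
  · rw [dif_pos (by omega), dif_pos h, dif_pos (by omega)]
    congr 1; simp [Fin.ext_iff]; omega
  · rw [dif_neg (by omega), dif_neg h]

lemma seg_prefix (M L c a len : ℕ) (hM : M = c + L) (hlen : a + len ≤ c) (u : Fin M → ℂ) :
    seg c a len (seg M 0 c u) = seg M a len u := by
  subst hM
  funext i
  simp only [seg]
  have hi : a + i.val < c := by omega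
  rw [dif_pos hi, dif_pos (by omega), dif_pos (by omega)]
  congr 1; simp [Fin.ext_iff]

lemma seg_castAdd (c L : ℕ) (w : Fin (c + L) → ℂ) (i : Fin c) :
    seg (c + L) 0 c w i = w (Fin.castAdd L i) := by
  simp only [seg]
  rw [dif_pos (by omega)]
  congr 1; simp [Fin.ext_iff]

lemma seg_natAdd (c L : ℕ) (w : Fin (c + L) → ℂ) (i : Fin L) :
    seg (c + L) c L w i = w (Fin.natAdd c i) := by
  simp only [seg]
  rw [dif_pos (by omega)]
  rfl

noncomputable def bp : (m : List ℕ) → (∀ j : Fin m.length, Perm (Fin (m.get j))) → Perm (Fin m.sum)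
  | [], _ => 1
  | c :: l, h =>
      finSumFinEquiv.permCongr
        ((h (0 : Fin (l.length + 1))).sumCongr (bp l fun j => h j.succ))

lemma bp_castAdd (c : ℕ) (l : List ℕ) (h : ∀ j : Fin (c :: l).length, Perm (Fin ((c :: l).get j)))
    (i : Fin c) :
    bp (c :: l) h (Fin.castAdd l.sum i) = Fin.castAdd l.sum (h (0 : Fin (l.length + 1)) i) := by
  show (finSumFinEquiv (m := (c :: l).get (0 : Fin (l.length + 1))) (n := l.sum)).permCongr
    ((h (0 : Fin (l.length + 1))).sumCongr (bp l fun j => h j.succ)) (Fin.castAdd l.sum i) = _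
  rw [Equiv.permCongr_apply]
  erw [finSumFinEquiv_symm_apply_castAdd]
  simp
  rfl

lemma bp_natAdd (c : ℕ) (l : List ℕ) (h : ∀ j : Fin (c :: l).length, Perm (Fin ((c :: l).get j)))
    (i : Fin l.sum) :
    bp (c :: l) h (Fin.natAdd c i) = Fin.natAdd c ((bp l fun j => h j.succ) i) := by
  show (finSumFinEquiv (m := (c :: l).get (0 : Fin (l.length + 1))) (n := l.sum)).permCongr
    ((h (0 : Fin (l.length + 1))).sumCongr (bp l fun j => h j.succ))
    (Fin.natAdd ((c :: l).get (0 : Fin (l.length + 1))) i) = _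
  rw [Equiv.permCongr_apply]
  erw [finSumFinEquiv_symm_apply_natAdd]
  simp
  rfl

lemma sign_bp_cons (c : ℕ) (l : List ℕ) (h : ∀ j : Fin (c :: l).length, Perm (Fin ((c :: l).get j))) :
    Perm.sign (bp (c :: l) h) =
      Perm.sign (h (0 : Fin (l.length + 1))) * Perm.sign (bp l fun j => h j.succ) := by
  show Perm.sign ((finSumFinEquiv (m := (c :: l).get (0 : Fin (l.length + 1))) (n := l.sum)).permCongr
    ((h (0 : Fin (l.length + 1))).sumCongr (bp l fun j => h j.succ))) = _
  rw [Perm.sign_permCongr, Perm.sign_sumCongr]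

-- seg of composed with bp
lemma seg_bp_left (c : ℕ) (l : List ℕ) (h : ∀ j : Fin (c :: l).length, Perm (Fin ((c :: l).get j)))
    (v : Fin (c + l.sum) → ℂ) :
    seg (c + l.sum) 0 c (v ∘ bp (c :: l) h) =
      (seg (c + l.sum) 0 c v) ∘ (h (0 : Fin (l.length + 1))) := by
  funext i
  rw [seg_castAdd]
  show v (bp (c :: l) h (Fin.castAdd l.sum i)) = _
  rw [bp_castAdd]
  exact (seg_castAdd c l.sum v _).symm

lemma seg_bp_right (c : ℕ) (l : List ℕ) (h : ∀ j : Fin (c :: l).length, Perm (Fin ((c :: l).get j)))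
    (v : Fin (c + l.sum) → ℂ) :
    seg (c + l.sum) c l.sum (v ∘ bp (c :: l) h) =
      (seg (c + l.sum) c l.sum v) ∘ (bp l fun j => h j.succ) := by
  funext i
  rw [seg_natAdd]
  show v (bp (c :: l) h (Fin.natAdd c i)) = _
  rw [bp_natAdd]
  exact (seg_natAdd c l.sum v _).symm

lemma Pprod_eq (β γ : ℂ) (n : ℕ) (w : Fin n → ℂ) :
    Pprod β γ n 1 n w = ∏ j : Fin n, ∏ k : Fin n, if j < k then Pcub β γ (w k - w j) else 1 := by
  unfold Pprod
  refine Finset.prod_congr rfl fun j _ => Finset.prod_congr rfl fun k _ => ?_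
  congr 1
  simp only [eq_iff_iff]
  constructor
  · rintro ⟨-, h, -⟩; exact h
  · intro h; exact ⟨Nat.le_add_left 1 j.val, h, k.isLt⟩

set_option maxRecDepth 8000 in
lemma Pprod_split (β γ : ℂ) (c L : ℕ) (w : Fin (c + L) → ℂ) :
    Pprod β γ (c + L) 1 (c + L) w =
      ((∏ i : Fin c, ∏ i' : Fin L,
          Pcub β γ (seg (c + L) c L w i' - seg (c + L) 0 c w i))
        * Pprod β γ c 1 c (seg (c + L) 0 c w))
        * Pprod β γ L 1 L (seg (c + L) c L w) := by
  rw [Pprod_eq, Pprod_eq, Pprod_eq]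
  rw [← Equiv.prod_comp finSumFinEquiv
    (fun j => ∏ k : Fin (c + L), if j < k then Pcub β γ (w k - w j) else 1)]
  have inner : ∀ j : Fin (c + L),
      (∏ k : Fin (c + L), if j < k then Pcub β γ (w k - w j) else 1)
      = ∏ y : Fin c ⊕ Fin L,
          if j < finSumFinEquiv y then Pcub β γ (w (finSumFinEquiv y) - w j) else 1 := by
    intro j
    rw [← Equiv.prod_comp finSumFinEquiv (fun k => if j < k then Pcub β γ (w k - w j) else 1)]
  simp only [inner]
  rw [Fintype.prod_sum_type]
  simp only [Fintype.prod_sum_type, finSumFinEquiv_apply_left, finSumFinEquiv_apply_right]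
  have hll : ∀ (a b : Fin c), (Fin.castAdd L a < Fin.castAdd L b) = (a < b) := fun a b =>
    propext (by simp only [Fin.lt_def, Fin.coe_castAdd])
  have hrr : ∀ (a b : Fin L), (Fin.natAdd c a < Fin.natAdd c b) = (a < b) := fun a b =>
    propext (by simp only [Fin.lt_def, Fin.coe_natAdd]; omega)
  have hlr : ∀ (a : Fin c) (b : Fin L), (Fin.castAdd L a < Fin.natAdd c b) = True := fun a b =>
    propext (by simp only [Fin.lt_def, Fin.coe_castAdd, Fin.coe_natAdd, iff_true]; omega)
  have hrl : ∀ (a : Fin L) (b : Fin c), (Fin.natAdd c a < Fin.castAdd L b) = False := fun a b =>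
    propext (by simp only [Fin.lt_def, Fin.coe_castAdd, Fin.coe_natAdd, iff_false, not_lt]; omega)
  simp only [hll, hrr, hlr, hrl, if_true, if_false, Finset.prod_const_one, mul_one,
    seg_castAdd, seg_natAdd, Finset.prod_mul_distrib]
  ring

lemma cross_inv (β γ : ℂ) (c L : ℕ) (w₁ : Fin c → ℂ) (w₂ : Fin L → ℂ)
    (σ : Perm (Fin c)) (ρ : Perm (Fin L)) :
    (∏ i : Fin c, ∏ i' : Fin L, Pcub β γ (w₂ (ρ i') - w₁ (σ i)))
      = ∏ i : Fin c, ∏ i' : Fin L, Pcub β γ (w₂ i' - w₁ i) := by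
  rw [← Equiv.prod_comp σ (fun i => ∏ i' : Fin L, Pcub β γ (w₂ i' - w₁ i))]
  refine Finset.prod_congr rfl fun i _ => ?_
  exact Equiv.prod_comp ρ (fun i' => Pcub β γ (w₂ i' - w₁ (σ i)))

/-- the single-cluster bulk combination -/
noncomputable def FF (β γ : ℂ) (Q : (n : ℕ) → (Fin n → ℂ) → ℂ) (c : ℕ) (v : Fin c → ℂ) : ℂ :=
  (Ktilde c v + ((c : ℂ) ^ 3 - (c : ℂ)) * γ) * Q c v
    + ∑ n₁ ∈ Finset.Ioo 0 c, betaC β n₁ (c - n₁)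
        * Q n₁ (seg c 0 n₁ v) * Q (c - n₁) (seg c n₁ (c - n₁) v)

lemma BZ (β γ : ℂ) (Q : (n : ℕ) → (Fin n → ℂ) → ℂ)
    (hbulk : ∀ n : ℕ, 2 ≤ n → PReducible β γ n 1 n (fun v =>
      (Ktilde n v + ((n : ℂ) ^ 3 - (n : ℂ)) * γ) * Q n v
        + β * ∑ n₁ ∈ Finset.Ioo 0 n,
            (Real.sqrt ((n₁ : ℝ) * ((n - n₁ : ℕ) : ℝ) * (n : ℝ)) : ℂ)
              * Q n₁ (seg n 0 n₁ v) * Q (n - n₁) (seg n n₁ (n - n₁) v)))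
    (c : ℕ) (u : Fin c → ℂ) :
    ∑ σ : Perm (Fin c), ((Perm.sign σ : ℤ) : ℂ) * Pprod β γ c 1 c (u ∘ σ) * FF β γ Q c (u ∘ σ) = 0 := by
  have hFF : ∀ n : ℕ, 2 ≤ n → FF β γ Q n = (fun v =>
      (Ktilde n v + ((n : ℂ) ^ 3 - (n : ℂ)) * γ) * Q n v
        + β * ∑ n₁ ∈ Finset.Ioo 0 n,
            (Real.sqrt ((n₁ : ℝ) * ((n - n₁ : ℕ) : ℝ) * (n : ℝ)) : ℂ)
              * Q n₁ (seg n 0 n₁ v) * Q (n - n₁) (seg n n₁ (n - n₁) v)) := by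
    intro n hn
    funext v
    unfold FF
    congr 1
    rw [Finset.mul_sum]
    refine Finset.sum_congr rfl fun n₁ hn₁ => ?_
    have h1 : 0 < n₁ ∧ n₁ < n := Finset.mem_Ioo.mp hn₁
    have : betaC β n₁ (n - n₁) = β *
        (Real.sqrt ((n₁ : ℝ) * ((n - n₁ : ℕ) : ℝ) * (n : ℝ)) : ℂ) := by
      unfold betaC
      congr 3
      rw [Nat.cast_sub (le_of_lt h1.2)]
      ring
    rw [this]; ring
  rcases Nat.lt_or_ge c 2 with hc | hc
  · -- c = 0 or 1 : FF vanishes identically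
    have hz : ∀ w : Fin c → ℂ, FF β γ Q c w = 0 := by
      intro w
      unfold FF
      interval_cases c
      · have h2 : Finset.Ioo 0 0 = (∅ : Finset ℕ) := rfl
        simp [Ktilde, h2]
      · have h2 : Finset.Ioo 0 1 = (∅ : Finset ℕ) := rfl
        simp [Ktilde, h2, Fin.sum_univ_succ]
    simp [hz]
  · have := hbulk c hc u
    rw [pop_eq] at this
    rw [← this]
    refine Finset.sum_congr rfl fun σ _ => ?_
    rw [hFF c hc]

noncomputable def BrR (β γ : ℂ) (Q : (n : ℕ) → (Fin n → ℂ) → ℂ) :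
    (m : List ℕ) → (Fin m.sum → ℂ) → ℂ
  | [], _ => 0
  | c :: l, v =>
      FF β γ Q c (seg (c + l.sum) 0 c v) * Qm Q l.sum l (seg (c + l.sum) c l.sum v)
        + Q c (seg (c + l.sum) 0 c v) * BrR β γ Q l (seg (c + l.sum) c l.sum v)

noncomputable def Theta (β γ : ℂ) (Q : (n : ℕ) → (Fin n → ℂ) → ℂ) (m : List ℕ)
    (v : Fin m.sum → ℂ) : ℂ :=
  ∑ h : ∀ j : Fin m.length, Perm (Fin (m.get j)),
    ((Perm.sign (bp m h) : ℤ) : ℂ) * Pprod β γ m.sum 1 m.sum (v ∘ bp m h)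
      * Qm Q m.sum m (v ∘ bp m h)

noncomputable def Psi (β γ : ℂ) (Q : (n : ℕ) → (Fin n → ℂ) → ℂ) (m : List ℕ)
    (v : Fin m.sum → ℂ) : ℂ :=
  ∑ h : ∀ j : Fin m.length, Perm (Fin (m.get j)),
    ((Perm.sign (bp m h) : ℤ) : ℂ) * Pprod β γ m.sum 1 m.sum (v ∘ bp m h)
      * BrR β γ Q m (v ∘ bp m h)

lemma T_cons' (β γ : ℂ) (Q : (n : ℕ) → (Fin n → ℂ) → ℂ) (c : ℕ) (l : List ℕ)
    (v : Fin (c + l.sum) → ℂ) (h₀ : Perm (Fin c)) (h' : ∀ j : Fin l.length, Perm (Fin (l.get j))) :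
    ((Perm.sign (bp (c :: l)
          ((Fin.consEquiv (fun j : Fin (l.length + 1) => Perm (Fin ((c :: l).get j)))) (h₀, h'))) : ℤ) : ℂ)
        * Pprod β γ (c :: l).sum 1 (c :: l).sum (v ∘ bp (c :: l)
            ((Fin.consEquiv (fun j : Fin (l.length + 1) => Perm (Fin ((c :: l).get j)))) (h₀, h')))
        * BrR β γ Q (c :: l) (v ∘ bp (c :: l)
            ((Fin.consEquiv (fun j : Fin (l.length + 1) => Perm (Fin ((c :: l).get j)))) (h₀, h')))
      = (∏ i : Fin c, ∏ i' : Fin l.sum,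
            Pcub β γ (seg (c + l.sum) c l.sum v i' - seg (c + l.sum) 0 c v i))
        * ((((Perm.sign h₀ : ℤ) : ℂ)
              * Pprod β γ c 1 c (seg (c + l.sum) 0 c v ∘ h₀)
              * FF β γ Q c (seg (c + l.sum) 0 c v ∘ h₀))
            * (((Perm.sign (bp l h') : ℤ) : ℂ)
                * Pprod β γ l.sum 1 l.sum (seg (c + l.sum) c l.sum v ∘ bp l h')
                * Qm Q l.sum l (seg (c + l.sum) c l.sum v ∘ bp l h'))
          + (((Perm.sign h₀ : ℤ) : ℂ)
              * Pprod β γ c 1 c (seg (c + l.sum) 0 c v ∘ h₀)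
              * Q c (seg (c + l.sum) 0 c v ∘ h₀))
            * (((Perm.sign (bp l h') : ℤ) : ℂ)
                * Pprod β γ l.sum 1 l.sum (seg (c + l.sum) c l.sum v ∘ bp l h')
                * BrR β γ Q l (seg (c + l.sum) c l.sum v ∘ bp l h'))) := by
  set H := (Fin.consEquiv (fun j : Fin (l.length + 1) => Perm (Fin ((c :: l).get j)))) (h₀, h')
    with hH
  have e1 : Pprod β γ (c :: l).sum 1 (c :: l).sum (v ∘ bp (c :: l) H)
      = Pprod β γ (c + l.sum) 1 (c + l.sum) (v ∘ bp (c :: l) H) := rfl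
  have e2 : seg (c + l.sum) 0 c (v ∘ bp (c :: l) H) = seg (c + l.sum) 0 c v ∘ h₀ :=
    (seg_bp_left c l H v).trans rfl
  have e3 : seg (c + l.sum) c l.sum (v ∘ bp (c :: l) H)
      = seg (c + l.sum) c l.sum v ∘ bp l h' :=
    (seg_bp_right c l H v).trans rfl
  have e4 : BrR β γ Q (c :: l) (v ∘ bp (c :: l) H)
      = FF β γ Q c (seg (c + l.sum) 0 c v ∘ h₀)
          * Qm Q l.sum l (seg (c + l.sum) c l.sum v ∘ bp l h')
        + Q c (seg (c + l.sum) 0 c v ∘ h₀)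
          * BrR β γ Q l (seg (c + l.sum) c l.sum v ∘ bp l h') := by
    show FF β γ Q c (seg (c + l.sum) 0 c (v ∘ bp (c :: l) H))
          * Qm Q l.sum l (seg (c + l.sum) c l.sum (v ∘ bp (c :: l) H))
        + Q c (seg (c + l.sum) 0 c (v ∘ bp (c :: l) H))
          * BrR β γ Q l (seg (c + l.sum) c l.sum (v ∘ bp (c :: l) H)) = _
    rw [e2, e3]
  have e5 : Perm.sign (bp (c :: l) H) = Perm.sign h₀ * Perm.sign (bp l h') :=
    (sign_bp_cons c l H).trans rfl
  rw [e1, Pprod_split, e2, e3, e4, e5]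
  simp only [Function.comp_apply]
  rw [cross_inv β γ c l.sum (seg (c + l.sum) 0 c v) (seg (c + l.sum) c l.sum v) h₀ (bp l h')]
  push_cast
  ring

lemma Psi_cons (β γ : ℂ) (Q : (n : ℕ) → (Fin n → ℂ) → ℂ) (c : ℕ) (l : List ℕ)
    (v : Fin (c + l.sum) → ℂ) :
    Psi β γ Q (c :: l) v =
      (∏ i : Fin c, ∏ i' : Fin l.sum,
          Pcub β γ (seg (c + l.sum) c l.sum v i' - seg (c + l.sum) 0 c v i))
        * ((∑ σ : Perm (Fin c), ((Perm.sign σ : ℤ) : ℂ)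
              * Pprod β γ c 1 c (seg (c + l.sum) 0 c v ∘ σ)
              * FF β γ Q c (seg (c + l.sum) 0 c v ∘ σ))
            * Theta β γ Q l (seg (c + l.sum) c l.sum v)
          + (∑ σ : Perm (Fin c), ((Perm.sign σ : ℤ) : ℂ)
              * Pprod β γ c 1 c (seg (c + l.sum) 0 c v ∘ σ)
              * Q c (seg (c + l.sum) 0 c v ∘ σ))
            * Psi β γ Q l (seg (c + l.sum) c l.sum v)) := by
  unfold Psi Theta
  refine Eq.trans (Eq.symm (Equiv.sum_comp
    (Fin.consEquiv (fun j : Fin (l.length + 1) => Perm (Fin ((c :: l).get j))))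
    (fun h => ((Perm.sign (bp (c :: l) h) : ℤ) : ℂ)
      * Pprod β γ (c :: l).sum 1 (c :: l).sum (v ∘ bp (c :: l) h)
      * BrR β γ Q (c :: l) (v ∘ bp (c :: l) h)))) ?_
  rw [Fintype.sum_prod_type]
  refine Eq.trans (Finset.sum_congr rfl fun h₀ _ => Finset.sum_congr rfl fun h' _ =>
    T_cons' β γ Q c l v h₀ h') ?_
  simp only [← Finset.mul_sum]
  congr 1
  simp only [Finset.sum_add_distrib, ← Finset.mul_sum, ← Finset.sum_mul]
  rfl

lemma Psi_zero (β γ : ℂ) (Q : (n : ℕ) → (Fin n → ℂ) → ℂ)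
    (hbulk : ∀ n : ℕ, 2 ≤ n → PReducible β γ n 1 n (fun v =>
      (Ktilde n v + ((n : ℂ) ^ 3 - (n : ℂ)) * γ) * Q n v
        + β * ∑ n₁ ∈ Finset.Ioo 0 n,
            (Real.sqrt ((n₁ : ℝ) * ((n - n₁ : ℕ) : ℝ) * (n : ℝ)) : ℂ)
              * Q n₁ (seg n 0 n₁ v) * Q (n - n₁) (seg n n₁ (n - n₁) v))) :
    ∀ (m : List ℕ) (v : Fin m.sum → ℂ), Psi β γ Q m v = 0 := by
  intro m
  induction m with
  | nil => intro v; simp [Psi, BrR]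
  | cons c l ih =>
      intro v
      rw [Psi_cons β γ Q c l v, BZ β γ Q hbulk, ih]
      ring

lemma Qm_cons (Q : (n : ℕ) → (Fin n → ℂ) → ℂ) (M c L : ℕ) (l : List ℕ) (hM : M = c + L)
    (v : Fin M → ℂ) :
    Qm Q M (c :: l) v = Q c (seg M 0 c v) * Qm Q L l (seg M c L v) := by
  subst hM
  unfold Qm
  refine Eq.trans (Fin.prod_univ_succ (fun j : Fin (l.length + 1) =>
    Q ((c :: l).get j) (seg (c + L) (((c :: l).take j.val).sum) ((c :: l).get j) v))) ?_
  congr 1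
  refine Finset.prod_congr rfl fun j _ => ?_
  have hs : seg (c + L) (c + (l.take j.val).sum) (l.get j) v
      = seg L ((l.take j.val).sum) (l.get j) (seg (c + L) c L v) :=
    seg_shift (c + L) L c ((l.take j.val).sum) (l.get j) rfl v
  exact congrArg (Q (l.get j)) hs

lemma Br_bridge (β γ : ℂ) (Q : (n : ℕ) → (Fin n → ℂ) → ℂ) :
    ∀ (m : List ℕ) (v : Fin m.sum → ℂ),
    ((∑ j : Fin m.length,
        (Ktilde (m.get j) (seg m.sum ((m.take j.val).sum) (m.get j) v)
          + ((m.get j : ℂ) ^ 3 - (m.get j : ℂ)) * γ)) * Qm Q m.sum m v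
      + ∑ k : Fin m.length, ∑ n₁ ∈ Finset.Ioo 0 (m.get k),
          betaC β n₁ (m.get k - n₁)
            * Qm Q m.sum (m.take k.val ++ [n₁, m.get k - n₁] ++ m.drop (k.val + 1)) v)
    = BrR β γ Q m v := by
  intro m
  induction m with
  | nil =>
      intro v
      show (∑ j : Fin 0, _) * _ + (∑ k : Fin 0, _) = BrR β γ Q [] v
      simp [BrR]
  | cons c l ih =>
      intro v
      have hA : (∑ j : Fin (c :: l).length,
          (Ktilde ((c :: l).get j)
              (seg (c :: l).sum (((c :: l).take j.val).sum) ((c :: l).get j) v)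
            + (((c :: l).get j : ℂ) ^ 3 - ((c :: l).get j : ℂ)) * γ))
          = (Ktilde c (seg (c + l.sum) 0 c v) + ((c : ℂ) ^ 3 - (c : ℂ)) * γ)
            + ∑ j : Fin l.length,
                (Ktilde (l.get j)
                    (seg l.sum ((l.take j.val).sum) (l.get j) (seg (c + l.sum) c l.sum v))
                  + ((l.get j : ℂ) ^ 3 - (l.get j : ℂ)) * γ) := by
        refine Eq.trans (Fin.sum_univ_succ (fun j : Fin (l.length + 1) =>
          (Ktilde ((c :: l).get j)
              (seg (c + l.sum) (((c :: l).take j.val).sum) ((c :: l).get j) v)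
            + (((c :: l).get j : ℂ) ^ 3 - ((c :: l).get j : ℂ)) * γ))) ?_
        congr 1
        refine Finset.sum_congr rfl fun j _ => ?_
        have hs : seg (c + l.sum) (c + (l.take j.val).sum) (l.get j) v
            = seg l.sum ((l.take j.val).sum) (l.get j) (seg (c + l.sum) c l.sum v) :=
          seg_shift (c + l.sum) l.sum c ((l.take j.val).sum) (l.get j) rfl v
        exact congrArg (fun w => Ktilde (l.get j) w
          + ((l.get j : ℂ) ^ 3 - (l.get j : ℂ)) * γ) hs
      have hB : (∑ k : Fin (c :: l).length, ∑ n₁ ∈ Finset.Ioo 0 ((c :: l).get k),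
            betaC β n₁ ((c :: l).get k - n₁)
              * Qm Q (c :: l).sum
                  ((c :: l).take k.val ++ [n₁, (c :: l).get k - n₁] ++ (c :: l).drop (k.val + 1)) v)
          = (∑ n₁ ∈ Finset.Ioo 0 c,
                betaC β n₁ (c - n₁)
                  * Q n₁ (seg c 0 n₁ (seg (c + l.sum) 0 c v))
                  * Q (c - n₁) (seg c n₁ (c - n₁) (seg (c + l.sum) 0 c v)))
              * Qm Q l.sum l (seg (c + l.sum) c l.sum v)
            + Q c (seg (c + l.sum) 0 c v)
              * ∑ j : Fin l.length, ∑ n₁ ∈ Finset.Ioo 0 (l.get j),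
                  betaC β n₁ (l.get j - n₁)
                    * Qm Q l.sum (l.take j.val ++ [n₁, l.get j - n₁] ++ l.drop (j.val + 1))
                        (seg (c + l.sum) c l.sum v) := by
        refine Eq.trans (Fin.sum_univ_succ (fun k : Fin (l.length + 1) =>
          ∑ n₁ ∈ Finset.Ioo 0 ((c :: l).get k),
            betaC β n₁ ((c :: l).get k - n₁)
              * Qm Q (c + l.sum)
                  ((c :: l).take k.val ++ [n₁, (c :: l).get k - n₁] ++ (c :: l).drop (k.val + 1)) v)) ?_
        congr 1
        · -- k = 0 term
          rw [Finset.sum_mul]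
          refine Finset.sum_congr rfl fun n₁ hn₁ => ?_
          have hn := Finset.mem_Ioo.mp hn₁
          have q1 : Qm Q (c + l.sum) (n₁ :: (c - n₁) :: l) v
              = Q n₁ (seg (c + l.sum) 0 n₁ v)
                * Qm Q ((c - n₁) + l.sum) ((c - n₁) :: l) (seg (c + l.sum) n₁ ((c - n₁) + l.sum) v) :=
            Qm_cons Q (c + l.sum) n₁ ((c - n₁) + l.sum) ((c - n₁) :: l) (by omega) v
          have q2 : Qm Q ((c - n₁) + l.sum) ((c - n₁) :: l) (seg (c + l.sum) n₁ ((c - n₁) + l.sum) v)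
              = Q (c - n₁) (seg ((c - n₁) + l.sum) 0 (c - n₁) (seg (c + l.sum) n₁ ((c - n₁) + l.sum) v))
                * Qm Q l.sum l (seg ((c - n₁) + l.sum) (c - n₁) l.sum (seg (c + l.sum) n₁ ((c - n₁) + l.sum) v)) :=
            Qm_cons Q ((c - n₁) + l.sum) (c - n₁) l.sum l rfl _
          have s1 : seg ((c - n₁) + l.sum) 0 (c - n₁) (seg (c + l.sum) n₁ ((c - n₁) + l.sum) v)
              = seg (c + l.sum) n₁ (c - n₁) v := by
            have := seg_shift (c + l.sum) ((c - n₁) + l.sum) n₁ 0 (c - n₁) (by omega) v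
            rw [add_zero] at this
            exact this.symm
          have s2 : seg ((c - n₁) + l.sum) (c - n₁) l.sum (seg (c + l.sum) n₁ ((c - n₁) + l.sum) v)
              = seg (c + l.sum) c l.sum v := by
            have := seg_shift (c + l.sum) ((c - n₁) + l.sum) n₁ (c - n₁) l.sum (by omega) v
            rw [(by omega : n₁ + (c - n₁) = c)] at this
            exact this.symm
          have s3 : seg c 0 n₁ (seg (c + l.sum) 0 c v) = seg (c + l.sum) 0 n₁ v :=
            seg_prefix (c + l.sum) l.sum c 0 n₁ rfl (by omega) v
          have s4 : seg c n₁ (c - n₁) (seg (c + l.sum) 0 c v) = seg (c + l.sum) n₁ (c - n₁) v :=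
            seg_prefix (c + l.sum) l.sum c n₁ (c - n₁) rfl (by omega) v
          show betaC β n₁ (c - n₁) * Qm Q (c + l.sum) (n₁ :: (c - n₁) :: l) v = _
          rw [q1, q2, s1, s2, s3, s4]
          ring
        · -- k = succ terms
          rw [Finset.mul_sum]
          refine Finset.sum_congr rfl fun j _ => ?_
          rw [Finset.mul_sum]
          refine Finset.sum_congr rfl fun n₁ _ => ?_
          have q1 : Qm Q (c + l.sum)
              (c :: (l.take j.val ++ [n₁, l.get j - n₁] ++ l.drop (j.val + 1))) v
              = Q c (seg (c + l.sum) 0 c v)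
                * Qm Q l.sum (l.take j.val ++ [n₁, l.get j - n₁] ++ l.drop (j.val + 1))
                    (seg (c + l.sum) c l.sum v) :=
            Qm_cons Q (c + l.sum) c l.sum _ rfl v
          show betaC β n₁ (l.get j - n₁)
              * Qm Q (c + l.sum) (c :: (l.take j.val ++ [n₁, l.get j - n₁] ++ l.drop (j.val + 1))) v = _
          rw [q1]
          ring
      rw [hA, hB, show Qm Q (c :: l).sum (c :: l) v
          = Q c (seg (c + l.sum) 0 c v) * Qm Q l.sum l (seg (c + l.sum) c l.sum v) from
        Qm_cons Q (c + l.sum) c l.sum l rfl v]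
      rw [show BrR β γ Q (c :: l) v
          = FF β γ Q c (seg (c + l.sum) 0 c v) * Qm Q l.sum l (seg (c + l.sum) c l.sum v)
            + Q c (seg (c + l.sum) 0 c v) * BrR β γ Q l (seg (c + l.sum) c l.sum v) from rfl]
      rw [← ih (seg (c + l.sum) c l.sum v)]
      unfold FF
      ring

lemma SBP (m : List ℕ) (x : Fin m.length → ℝ)
    (h : ∀ j : Fin m.length, Perm (Fin (m.get j))) (v : Fin m.sum → ℂ) :
    ∑ j : Fin m.length,
        sumv (seg m.sum ((m.take j.val).sum) (m.get j) (v ∘ bp m h)) * (x j : ℂ)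
      = ∑ j : Fin m.length, sumv (seg m.sum ((m.take j.val).sum) (m.get j) v) * (x j : ℂ) := by
  induction m with
  | nil => rfl
  | cons c l ih =>
      have hL : (∑ j : Fin (c :: l).length,
          sumv (seg (c :: l).sum (((c :: l).take j.val).sum) ((c :: l).get j) (v ∘ bp (c :: l) h))
            * (x j : ℂ))
          = sumv (seg (c + l.sum) 0 c v) * (x (0 : Fin (l.length + 1)) : ℂ)
            + ∑ j : Fin l.length,
                sumv (seg l.sum ((l.take j.val).sum) (l.get j) (seg (c + l.sum) c l.sum v))
                  * (x j.succ : ℂ) := by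
        refine Eq.trans (Fin.sum_univ_succ (fun j : Fin (l.length + 1) =>
          sumv (seg (c + l.sum) (((c :: l).take j.val).sum) ((c :: l).get j) (v ∘ bp (c :: l) h))
            * (x j : ℂ))) ?_
        congr 1
        · -- first term
          have e2 : seg (c + l.sum) 0 c (v ∘ bp (c :: l) h)
              = seg (c + l.sum) 0 c v ∘ (h (0 : Fin (l.length + 1))) := seg_bp_left c l h v
          rw [show seg (c + l.sum) (((c :: l).take (0 : Fin (l.length + 1)).val).sum)
                ((c :: l).get (0 : Fin (l.length + 1))) (v ∘ bp (c :: l) h)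
              = seg (c + l.sum) 0 c (v ∘ bp (c :: l) h) from rfl, e2]
          congr 1
          exact Equiv.sum_comp (h (0 : Fin (l.length + 1))) (seg (c + l.sum) 0 c v)
        · -- tail
          refine Eq.trans (Finset.sum_congr rfl fun j _ => ?_)
            (ih (fun j => x j.succ) (fun j => h j.succ) (seg (c + l.sum) c l.sum v))
          have hs : seg (c + l.sum) (c + (l.take j.val).sum) (l.get j) (v ∘ bp (c :: l) h)
              = seg l.sum ((l.take j.val).sum) (l.get j)
                  (seg (c + l.sum) c l.sum (v ∘ bp (c :: l) h)) :=
            seg_shift (c + l.sum) l.sum c ((l.take j.val).sum) (l.get j) rfl _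
          rw [show seg (c + l.sum) (((c :: l).take (j.succ : Fin (l.length + 1)).val).sum)
                ((c :: l).get (j.succ : Fin (l.length + 1))) (v ∘ bp (c :: l) h)
              = seg (c + l.sum) (c + (l.take j.val).sum) (l.get j) (v ∘ bp (c :: l) h) from rfl,
            hs]
          exact congrArg (fun w => sumv (seg l.sum ((l.take j.val).sum) (l.get j) w) * (x j.succ : ℂ))
            (seg_bp_right c l h v)
      have hR : (∑ j : Fin (c :: l).length,
          sumv (seg (c :: l).sum (((c :: l).take j.val).sum) ((c :: l).get j) v) * (x j : ℂ))
          = sumv (seg (c + l.sum) 0 c v) * (x (0 : Fin (l.length + 1)) : ℂ)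
            + ∑ j : Fin l.length,
                sumv (seg l.sum ((l.take j.val).sum) (l.get j) (seg (c + l.sum) c l.sum v))
                  * (x j.succ : ℂ) := by
        refine Eq.trans (Fin.sum_univ_succ (fun j : Fin (l.length + 1) =>
          sumv (seg (c + l.sum) (((c :: l).take j.val).sum) ((c :: l).get j) v) * (x j : ℂ))) ?_
        congr 1
        refine Finset.sum_congr rfl fun j _ => ?_
        have hs : seg (c + l.sum) (c + (l.take j.val).sum) (l.get j) v
            = seg l.sum ((l.take j.val).sum) (l.get j) (seg (c + l.sum) c l.sum v) :=
          seg_shift (c + l.sum) l.sum c ((l.take j.val).sum) (l.get j) rfl v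
        rw [show seg (c + l.sum) (((c :: l).take (j.succ : Fin (l.length + 1)).val).sum)
              ((c :: l).get (j.succ : Fin (l.length + 1))) v
            = seg (c + l.sum) (c + (l.take j.val).sum) (l.get j) v from rfl, hs]
      exact hL.trans hR.symm

lemma EBP (m : List ℕ) (x : Fin m.length → ℝ)
    (h : ∀ j : Fin m.length, Perm (Fin (m.get j))) (v : Fin m.sum → ℂ) :
    expFactor m.sum m x (v ∘ bp m h) = expFactor m.sum m x v :=
  congrArg Complex.exp (SBP m x h v)

lemma main_lemma (β γ : ℂ) (Q : (n : ℕ) → (Fin n → ℂ) → ℂ)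
    (hbulk : ∀ n : ℕ, 2 ≤ n → PReducible β γ n 1 n (fun v =>
      (Ktilde n v + ((n : ℂ) ^ 3 - (n : ℂ)) * γ) * Q n v
        + β * ∑ n₁ ∈ Finset.Ioo 0 n,
            (Real.sqrt ((n₁ : ℝ) * ((n - n₁ : ℕ) : ℝ) * (n : ℝ)) : ℂ)
              * Q n₁ (seg n 0 n₁ v) * Q (n - n₁) (seg n n₁ (n - n₁) v)))
    (m : List ℕ) (x : Fin m.length → ℝ) (v : Fin m.sum → ℂ) :
    Pop β γ m.sum 1 m.sum (fun u =>
      ((∑ j : Fin m.length,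
          (Ktilde (m.get j) (seg m.sum ((m.take j.val).sum) (m.get j) u)
            + ((m.get j : ℂ) ^ 3 - (m.get j : ℂ)) * γ)) * Qm Q m.sum m u
        + ∑ k : Fin m.length, ∑ n₁ ∈ Finset.Ioo 0 (m.get k),
            betaC β n₁ (m.get k - n₁)
              * Qm Q m.sum (m.take k.val ++ [n₁, m.get k - n₁] ++ m.drop (k.val + 1)) u)
      * expFactor m.sum m x u) v = 0 := by
  rw [pop_eq]
  set G : (Fin m.sum → ℂ) → ℂ := fun u =>
      ((∑ j : Fin m.length,
          (Ktilde (m.get j) (seg m.sum ((m.take j.val).sum) (m.get j) u)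
            + ((m.get j : ℂ) ^ 3 - (m.get j : ℂ)) * γ)) * Qm Q m.sum m u
        + ∑ k : Fin m.length, ∑ n₁ ∈ Finset.Ioo 0 (m.get k),
            betaC β n₁ (m.get k - n₁)
              * Qm Q m.sum (m.take k.val ++ [n₁, m.get k - n₁] ++ m.drop (k.val + 1)) u)
      * expFactor m.sum m x u with hG
  have hfun : ∀ w : Fin m.sum → ℂ, G w = BrR β γ Q m w * expFactor m.sum m x w := by
    intro w
    show ((∑ j : Fin m.length,
          (Ktilde (m.get j) (seg m.sum ((m.take j.val).sum) (m.get j) w)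
            + ((m.get j : ℂ) ^ 3 - (m.get j : ℂ)) * γ)) * Qm Q m.sum m w
        + ∑ k : Fin m.length, ∑ n₁ ∈ Finset.Ioo 0 (m.get k),
            betaC β n₁ (m.get k - n₁)
              * Qm Q m.sum (m.take k.val ++ [n₁, m.get k - n₁] ++ m.drop (k.val + 1)) w)
      * expFactor m.sum m x w = _
    rw [Br_bridge β γ Q m w]
  set T : Perm (Fin m.sum) → ℂ := fun s =>
    ((Perm.sign s : ℤ) : ℂ) * Pprod β γ m.sum 1 m.sum (v ∘ s) * G (v ∘ s) with hT
  show ∑ s : Perm (Fin m.sum), T s = 0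
  have hcard : ((Fintype.card (∀ j : Fin m.length, Perm (Fin (m.get j))) : ℕ) : ℂ) ≠ 0 :=
    Nat.cast_ne_zero.mpr Fintype.card_ne_zero
  refine (mul_eq_zero.mp ?_).resolve_left hcard
  have h2 : ∀ h : ∀ j : Fin m.length, Perm (Fin (m.get j)),
      (∑ s : Perm (Fin m.sum), T s) = ∑ s : Perm (Fin m.sum), T (s * bp m h) :=
    fun h => (Equiv.sum_comp (Equiv.mulRight (bp m h)) T).symm
  have h4 : ((Fintype.card (∀ j : Fin m.length, Perm (Fin (m.get j))) : ℕ) : ℂ)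
      * ∑ s : Perm (Fin m.sum), T s
      = ∑ h : ∀ j : Fin m.length, Perm (Fin (m.get j)), ∑ s : Perm (Fin m.sum), T (s * bp m h) := by
    rw [Finset.sum_congr rfl fun h _ => (h2 h).symm, Finset.sum_const, Finset.card_univ,
      nsmul_eq_mul]
  rw [h4, Finset.sum_comm]
  have key : ∀ s : Perm (Fin m.sum),
      (∑ h : ∀ j : Fin m.length, Perm (Fin (m.get j)), T (s * bp m h)) = 0 := by
    intro s
    have hterm : ∀ h : ∀ j : Fin m.length, Perm (Fin (m.get j)),
        T (s * bp m h) = (((Perm.sign s : ℤ) : ℂ) * expFactor m.sum m x (v ∘ s))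
          * (((Perm.sign (bp m h) : ℤ) : ℂ)
              * Pprod β γ m.sum 1 m.sum ((v ∘ s) ∘ bp m h)
              * BrR β γ Q m ((v ∘ s) ∘ bp m h)) := by
      intro h
      show ((Perm.sign (s * bp m h) : ℤ) : ℂ)
          * Pprod β γ m.sum 1 m.sum (v ∘ ⇑(s * bp m h)) * G (v ∘ ⇑(s * bp m h)) = _
      have hv : v ∘ ⇑(s * bp m h) = (v ∘ s) ∘ bp m h := rfl
      rw [hv, map_mul, hfun, EBP m x h (v ∘ s)]
      push_cast
      ring
    rw [Finset.sum_congr rfl fun h _ => hterm h, ← Finset.mul_sum]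
    rw [show (∑ h : ∀ j : Fin m.length, Perm (Fin (m.get j)),
        ((Perm.sign (bp m h) : ℤ) : ℂ)
          * Pprod β γ m.sum 1 m.sum ((v ∘ s) ∘ bp m h)
          * BrR β γ Q m ((v ∘ s) ∘ bp m h)) = Psi β γ Q m (v ∘ s) from rfl]
    rw [Psi_zero β γ Q hbulk m (v ∘ s), mul_zero]
  rw [Finset.sum_congr rfl fun s _ => key s, Finset.sum_const, smul_zero]


theorem stmt_17 (M : ℕ) (hM : 1 ≤ M) (β γ : ℂ)
    (Q : (n : ℕ) → (Fin n → ℂ) → ℂ)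
    (hQpoly : ∀ n : ℕ, ∃ p : MvPolynomial (Fin n) ℂ, ∀ v, Q n v = MvPolynomial.eval v p)
    (hQ1 : ∀ v : Fin 1 → ℂ, Q 1 v = 1)
    (hbulk : ∀ n : ℕ, 2 ≤ n → PReducible β γ n 1 n (fun v =>
      (Ktilde n v + ((n : ℂ) ^ 3 - (n : ℂ)) * γ) * Q n v
        + β * ∑ n₁ ∈ Finset.Ioo 0 n,
            (Real.sqrt ((n₁ : ℝ) * ((n - n₁ : ℕ) : ℝ) * (n : ℝ)) : ℂ)
              * Q n₁ (seg n 0 n₁ v) * Q (n - n₁) (seg n n₁ (n - n₁) v)))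
    (hjump : ∀ n₁ n₂ : ℕ, 1 ≤ n₁ → 1 ≤ n₂ → PReducible β γ (n₁ + n₂) 1 (n₁ + n₂) (fun v =>
      Vseg n₁ n₂ (n₁ + n₂) v * Q n₁ (seg (n₁ + n₂) 0 n₁ v) * Q n₂ (seg (n₁ + n₂) n₁ n₂ v)
        + Vseg n₂ n₁ (n₁ + n₂) v * Q n₂ (seg (n₁ + n₂) 0 n₂ v)
            * Q n₁ (seg (n₁ + n₂) n₂ n₁ v)
        + 2 * (n₁ : ℂ) * (n₂ : ℂ) * betaC β n₁ n₂ * Q (n₁ + n₂) v)) :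
    ∀ (m : List ℕ), (∀ x ∈ m, 0 < x) → m.sum = M →
    ∀ x : Fin m.length → ℝ,
    PReducible β γ M 1 M (fun v =>
      ((∑ j : Fin m.length,
          (Ktilde (m.get j) (seg M ((m.take j.val).sum) (m.get j) v)
            + ((m.get j : ℂ) ^ 3 - (m.get j : ℂ)) * γ)) * Qm Q M m v
        + ∑ k : Fin m.length, ∑ n₁ ∈ Finset.Ioo 0 (m.get k),
            betaC β n₁ (m.get k - n₁)
              * Qm Q M (m.take k.val ++ [n₁, m.get k - n₁] ++ m.drop (k.val + 1)) v)
      * expFactor M m x v) := by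
  intro m hpos hsum x
  subst hsum
  intro v
  exact main_lemma β γ Q hbulk m x v
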